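/- For n ≥ 4, the matrix L_n = [[0,0,1],[0,1,-1],[-1,-1,n]] induces a hyperbolic (Anosov) automorphism of the 3-torus: it has integer entries, determinant 1, and no eigenvalue of absolute value 1. -/

import Mathlib

open Matrix Polynomial in
/-- For `n ≥ 4`, the integer matrix `L n = [[0,0,1],[0,1,-1],[-1,-1,n]]` induces a hyperbolic
(Anosov) automorphism of the 3-torus: it has determinant 1 and no (complex) eigenvalue of
absolute value 1. -/
theorem Ln_hyperbolic (n : ℤ) (hn : 4 ≤ n) :
    (!![0, 0, 1; 0, 1, -1; -1, -1, n] : Matrix (Fin 3) (Fin 3) ℤ).det = 1 ∧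
    ∀ μ : ℂ, (!![0, 0, 1; 0, 1, -1; -1, -1, (n : ℂ)] :
        Matrix (Fin 3) (Fin 3) ℂ).charpoly.IsRoot μ → ‖μ‖ ≠ 1 := by
  constructor
  · rw [Matrix.det_fin_three]; simp
  · intro μ h habs
    -- extract the characteristic polynomial equation
    rw [Matrix.charpoly, Matrix.det_fin_three] at h
    simp only [charmatrix_apply, IsRoot, Matrix.diagonal_apply,
      show (0:Fin 3) ≠ 1 by decide, show (0:Fin 3) ≠ 2 by decide,
      show (1:Fin 3) ≠ 0 by decide, show (1:Fin 3) ≠ 2 by decide, show (2:Fin 3) ≠ 0 by decide,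
      show (2:Fin 3) ≠ 1 by decide, ite_false, ite_true,
      eval_sub, eval_mul, eval_add, eval_neg, eval_X, eval_C, eval_one, eval_zero] at h
    norm_num [Matrix.cons_val_zero, Matrix.cons_val_one, Matrix.head_cons,
      Matrix.cons_val_fin_one, Fin.isValue, Matrix.cons_val_two, Matrix.tail_cons] at h
    have p : μ^3 - ((n:ℂ)+1)*μ^2 + (n:ℂ)*μ - 1 = 0 := by linear_combination h
    have hμ0 : μ ≠ 0 := by
      intro h0; rw [h0] at habs; simp at habs
    set c := (starRingEnd ℂ) μ with hc
    have hmc : μ * c = 1 := by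
      rw [hc, Complex.mul_conj, Complex.normSq_eq_norm_sq, habs]; norm_num
    have hq : c^3 - ((n:ℂ)+1)*c^2 + (n:ℂ)*c - 1 = 0 := by
      have := congrArg (starRingEnd ℂ) p
      simpa [hc] using this
    have hcinv : c = μ⁻¹ := eq_inv_of_mul_eq_one_left (by linear_combination hmc)
    have hq' : 1 - ((n:ℂ)+1)*μ + (n:ℂ)*μ^2 - μ^3 = 0 := by
      rw [hcinv] at hq
      field_simp at hq
      have hmm : μ^3 * (1 - ((n:ℂ)+1)*μ + (n:ℂ)*μ^2 - μ^3) = 0 := by linear_combination μ^3 * hq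
      rcases mul_eq_zero.1 hmm with h' | h'
      · exact absurd h' (pow_ne_zero 3 hμ0)
      · exact h'
    have h2 : μ^2 + μ = 0 := by linear_combination -p - hq'
    have hμ : μ = -1 := by
      have hfac : μ * (μ + 1) = 0 := by linear_combination h2
      rcases mul_eq_zero.1 hfac with h' | h'
      · exact absurd h' hμ0
      · exact eq_neg_of_add_eq_zero_left h'
    rw [hμ] at p
    have h3 : ((2*n + 3 : ℤ) : ℂ) = 0 := by push_cast; linear_combination -p
    have h4 : (2*n + 3 : ℤ) = 0 := by exact_mod_cast h3
    omega
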